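/- arXiv:2002.00859 — 2 statements merged into one kernel-verified Lean document; each statement's English description precedes it below -/
import Mathlib

section
/- Fix p ≥ 1 and ν ∈ W_p(ℝ). The translation map φ on W_p(ℝ) defined on quantile functions by F⁻¹_{φ(μ)} = F⁻¹_μ + F⁻¹_ν is a well-defined isometric embedding of W_p(ℝ) into itself, and φ is bijective if and only if ν is a Dirac mass. -/
open MeasureTheory Set

noncomputable section

/-- Cumulative distribution function `F_μ(x) = μ((-∞,x])`. -/
def cdfR (μ : Measure ℝ) (x : ℝ) : ℝ := (μ (Set.Iic x)).toReal

/-- Quantile function `F_μ⁻¹(t) = sup {x | F_μ(x) ≤ t}`. -/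
def quantR (μ : Measure ℝ) (t : ℝ) : ℝ := sSup {x : ℝ | cdfR μ x ≤ t}

/-- The Wasserstein space `W_p(ℝ)`: Borel probability measures on `ℝ` with finite
`p`-th moment. -/
def PRp (p : ℝ) : Set (Measure ℝ) :=
  {μ | IsProbabilityMeasure μ ∧ Integrable (fun x => |x| ^ p) μ}

/-- The `p`-Wasserstein distance on `ℝ` via quantile functions. -/
def dWpR (p : ℝ) (μ ν : Measure ℝ) : ℝ :=
  (∫ t in (0:ℝ)..1, |quantR μ t - quantR ν t| ^ p) ^ (1 / p)

namespace TransAux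

def leb01 : Measure ℝ := volume.restrict (Set.Ioo 0 1)

instance : IsProbabilityMeasure leb01 := by
  constructor
  rw [leb01, Measure.restrict_apply MeasurableSet.univ, Set.univ_inter, Real.volume_Ioo]
  norm_num

lemma cdfR_mono (μ : Measure ℝ) [IsProbabilityMeasure μ] : Monotone (cdfR μ) := fun x y hxy =>
  ENNReal.toReal_mono (measure_ne_top μ _) (measure_mono (Set.Iic_subset_Iic.2 hxy))

lemma cdfR_le_one (μ : Measure ℝ) [IsProbabilityMeasure μ] (x : ℝ) : cdfR μ x ≤ 1 := by
  rw [cdfR]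
  have := measure_mono (μ := μ) (Set.subset_univ (Set.Iic x))
  rw [measure_univ] at this
  simpa using ENNReal.toReal_mono (by simp) this

/-- The set `{x | F x ≤ t}` is nonempty for `t > 0`. -/
lemma exists_cdfR_le (μ : Measure ℝ) [IsProbabilityMeasure μ] {t : ℝ} (ht : 0 < t) :
    ∃ x : ℝ, cdfR μ x ≤ t := by
  have h1 : Filter.Tendsto (fun x : ℝ => μ (Set.Iic x)) Filter.atBot (nhds (μ (⋂ x : ℝ, Set.Iic x))) := by
    refine tendsto_measure_iInter_atBot (fun i => (measurableSet_Iic).nullMeasurableSet)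
      (fun i j hij => Set.Iic_subset_Iic.2 hij) ⟨0, measure_ne_top μ _⟩
  have h2 : (⋂ x : ℝ, Set.Iic x) = ∅ := by
    ext y; simp only [Set.mem_iInter, Set.mem_Iic, Set.mem_empty_iff_false, iff_false, not_forall]
    exact ⟨y - 1, by linarith⟩
  rw [h2, measure_empty] at h1
  have h3 : Filter.Tendsto (cdfR μ) Filter.atBot (nhds 0) := by
    have := (ENNReal.tendsto_toReal (by simp)).comp h1
    exact this
  exact (h3.eventually_le_const ht).exists

lemma exists_lt_cdfR (μ : Measure ℝ) [IsProbabilityMeasure μ] {t : ℝ} (ht : t < 1) :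
    ∃ x : ℝ, t < cdfR μ x := by
  have h1 : Filter.Tendsto (fun x : ℝ => μ (Set.Iic x)) Filter.atTop (nhds (μ Set.univ)) :=
    tendsto_measure_Iic_atTop μ
  rw [measure_univ] at h1
  have h3 : Filter.Tendsto (cdfR μ) Filter.atTop (nhds 1) := by
    have := (ENNReal.tendsto_toReal (by simp)).comp h1
    exact this
  exact (h3.eventually_const_lt ht).exists

variable {μ : Measure ℝ} [IsProbabilityMeasure μ]

lemma S_nonempty {t : ℝ} (ht : 0 < t) : {x : ℝ | cdfR μ x ≤ t}.Nonempty :=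
  exists_cdfR_le μ ht

lemma S_bddAbove {t : ℝ} (ht : t < 1) : BddAbove {x : ℝ | cdfR μ x ≤ t} := by
  obtain ⟨x₀, hx₀⟩ := exists_lt_cdfR μ ht
  refine ⟨x₀, fun y hy => ?_⟩
  by_contra hc
  push_neg at hc
  exact absurd (cdfR_mono μ hc.le) (by simp only [Set.mem_setOf_eq] at hy; linarith)

/-- (a): if `t < F x` then `q t ≤ x`. -/
lemma quantR_le {t x : ℝ} (ht : 0 < t) (h : t < cdfR μ x) : quantR μ t ≤ x := by
  refine csSup_le (S_nonempty ht) fun y hy => ?_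
  simp only [Set.mem_setOf_eq] at hy
  by_contra hc
  push_neg at hc
  exact absurd (cdfR_mono μ hc.le) (by linarith)

/-- (b): if `F x < t < 1` then `x < q t` (uses right-continuity of `F`). -/
lemma lt_quantR {t x : ℝ} (ht : t < 1) (h : cdfR μ x < t) : x < quantR μ t := by
  -- right-continuity: μ (Iic y) → μ (Iic x) as y → x from the right
  have h1 : Filter.Tendsto (fun y => μ (Set.Iic y)) (nhdsWithin x (Set.Ioi x))
      (nhds (μ (⋂ r ∈ Set.Ioi x, Set.Iic r))) := by
    refine tendsto_measure_biInter_gt (fun r _ => measurableSet_Iic.nullMeasurableSet)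
      (fun i j _ hij => Set.Iic_subset_Iic.2 hij) ⟨x + 1, by linarith, measure_ne_top μ _⟩
  have h2 : (⋂ r ∈ Set.Ioi x, Set.Iic r) = Set.Iic x := by
    ext y
    simp only [Set.mem_iInter, Set.mem_Iic, Set.mem_Ioi]
    constructor
    · intro hy
      by_contra hc; push_neg at hc
      have := hy ((x + y) / 2) (by linarith)
      linarith
    · intro hy r hr; linarith
  rw [h2] at h1
  have h3 : Filter.Tendsto (cdfR μ) (nhdsWithin x (Set.Ioi x)) (nhds (cdfR μ x)) :=
    (ENNReal.tendsto_toReal (measure_ne_top μ _)).comp h1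
  have h4 := h3.eventually_le_const h
  obtain ⟨y, hy1, hy2⟩ := (h4.and self_mem_nhdsWithin).exists
  have hyS : y ∈ {z : ℝ | cdfR μ z ≤ t} := Set.mem_setOf_eq ▸ hy1
  exact lt_of_lt_of_le hy2 (le_csSup (S_bddAbove ht) hyS)

lemma le_cdfR_of_quantR_le {t x : ℝ} (ht : t < 1) (h : quantR μ t ≤ x) : t ≤ cdfR μ x := by
  by_contra hc; push_neg at hc
  exact absurd h (not_le.2 (lt_quantR ht hc))

lemma quantR_monotoneOn : MonotoneOn (quantR μ) (Set.Ioo (0:ℝ) 1) := by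
  intro s hs t ht hst
  exact csSup_le_csSup (S_bddAbove ht.2) (S_nonempty hs.1) fun y hy =>
    le_trans hy hst

/-- Right-continuity-style property of the quantile function. -/
lemma quantR_rc {t x : ℝ} (ht : t ∈ Set.Ioo (0:ℝ) 1) (hx : quantR μ t < x) :
    ∃ s ∈ Set.Ioo t 1, quantR μ s ≤ x := by
  have hFx : t < cdfR μ x := by
    by_contra hc; push_neg at hc
    exact absurd (le_csSup (S_bddAbove ht.2) hc) (not_le.2 hx)
  refine ⟨min ((t + cdfR μ x) / 2) ((t + 1) / 2), ⟨?_, ?_⟩, ?_⟩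
  · exact lt_min (by linarith) (by linarith [ht.2])
  · exact lt_of_le_of_lt (min_le_right _ _) (by linarith [ht.2])
  · refine quantR_le (lt_trans ht.1 (lt_min (by linarith) (by linarith [ht.2]))) ?_
    exact lt_of_le_of_lt (min_le_left _ _) (by linarith)

lemma quantR_aemeasurable : AEMeasurable (quantR μ) leb01 :=
  aemeasurable_restrict_of_monotoneOn measurableSet_Ioo quantR_monotoneOn

/-- Lemma A: the pushforward of Lebesgue measure on `(0,1)` under the quantile function
of `μ` is `μ` itself. -/
lemma map_quantR : Measure.map (quantR μ) leb01 = μ := by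
  haveI : IsProbabilityMeasure (Measure.map (quantR μ) leb01) :=
    Measure.isProbabilityMeasure_map quantR_aemeasurable
  refine Measure.ext_of_Iic _ _ fun x => ?_
  rw [Measure.map_apply_of_aemeasurable quantR_aemeasurable measurableSet_Iic]
  rw [leb01, Measure.restrict_apply₀' measurableSet_Ioo.nullMeasurableSet]
  have hsub1 : Set.Ioo 0 (cdfR μ x) ⊆ quantR μ ⁻¹' Set.Iic x ∩ Set.Ioo 0 1 := by
    intro t ht
    have ht1 : t < 1 := lt_of_lt_of_le ht.2 (cdfR_le_one μ x)
    exact ⟨quantR_le ht.1 ht.2, ht.1, ht1⟩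
  have hsub2 : quantR μ ⁻¹' Set.Iic x ∩ Set.Ioo 0 1 ⊆ Set.Ioc 0 (cdfR μ x) := by
    rintro t ⟨h1, h2, h3⟩
    exact ⟨h2, le_cdfR_of_quantR_le h3 h1⟩
  have hF0 : (0:ℝ) ≤ cdfR μ x := ENNReal.toReal_nonneg
  have e1 : volume (Set.Ioo (0:ℝ) (cdfR μ x)) = ENNReal.ofReal (cdfR μ x) := by
    rw [Real.volume_Ioo]; simp
  have e2 : volume (Set.Ioc (0:ℝ) (cdfR μ x)) = ENNReal.ofReal (cdfR μ x) := by
    rw [Real.volume_Ioc]; simp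
  have := le_antisymm (le_trans (measure_mono hsub2) e2.le)
    (le_trans e1.ge (measure_mono hsub1))
  rw [this, cdfR, ENNReal.ofReal_toReal (measure_ne_top μ _)]

/-- Lemma B: the quantile function of the pushforward of `leb01` under a monotone,
right-continuous function `g` on `(0,1)` is `g` itself on `(0,1)`. -/
lemma quantR_map {g : ℝ → ℝ} (hmono : MonotoneOn g (Set.Ioo 0 1))
    (hrc : ∀ t ∈ Set.Ioo (0:ℝ) 1, ∀ x, g t < x → ∃ s ∈ Set.Ioo t 1, g s ≤ x)
    (hg : AEMeasurable g leb01) {t : ℝ} (ht : t ∈ Set.Ioo (0:ℝ) 1) :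
    quantR (Measure.map g leb01) t = g t := by
  set η := Measure.map g leb01 with hη
  have hFle : ∀ x, x < g t → cdfR η x ≤ t := by
    intro x hx
    have hpre : g ⁻¹' Set.Iic x ∩ Set.Ioo 0 1 ⊆ Set.Ioo 0 t := by
      rintro s ⟨h1, h2⟩
      refine ⟨h2.1, ?_⟩
      by_contra hc; push_neg at hc
      have := hmono ht h2 hc
      simp only [Set.mem_preimage, Set.mem_Iic] at h1
      linarith
    rw [cdfR, hη, Measure.map_apply_of_aemeasurable hg measurableSet_Iic,
      leb01, Measure.restrict_apply₀' measurableSet_Ioo.nullMeasurableSet]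
    calc (volume (g ⁻¹' Set.Iic x ∩ Set.Ioo 0 1)).toReal
        ≤ (volume (Set.Ioo (0:ℝ) t)).toReal := by
          refine ENNReal.toReal_mono (by simp [Real.volume_Ioo]) (measure_mono hpre)
      _ ≤ t := by rw [Real.volume_Ioo, sub_zero, ENNReal.toReal_ofReal ht.1.le]
  have hFgt : ∀ x, g t < x → t < cdfR η x := by
    intro x hx
    obtain ⟨s, hs, hgs⟩ := hrc t ht x hx
    have hpre : Set.Ioc 0 s ⊆ g ⁻¹' Set.Iic x ∩ Set.Ioo 0 1 := by
      rintro r ⟨h1, h2⟩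
      have hr : r ∈ Set.Ioo (0:ℝ) 1 := ⟨h1, lt_of_le_of_lt h2 hs.2⟩
      refine ⟨?_, hr⟩
      simp only [Set.mem_preimage, Set.mem_Iic]
      rcases eq_or_lt_of_le h2 with h | h
      · rw [h]; exact hgs
      · exact le_trans (hmono hr ⟨lt_trans ht.1 hs.1, hs.2⟩ h2) hgs
    rw [cdfR, hη, Measure.map_apply_of_aemeasurable hg measurableSet_Iic,
      leb01, Measure.restrict_apply₀' measurableSet_Ioo.nullMeasurableSet]
    calc t < s := hs.1
      _ = (volume (Set.Ioc (0:ℝ) s)).toReal := by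
          rw [Real.volume_Ioc]
          simp [ENNReal.toReal_ofReal (le_of_lt (lt_trans ht.1 hs.1))]
      _ ≤ (volume (g ⁻¹' Set.Iic x ∩ Set.Ioo 0 1)).toReal := by
          refine ENNReal.toReal_mono ?_ (measure_mono hpre)
          have : volume (g ⁻¹' Set.Iic x ∩ Set.Ioo 0 1) ≤ volume (Set.Ioo (0:ℝ) 1) :=
            measure_mono Set.inter_subset_right
          refine ne_of_lt (lt_of_le_of_lt this ?_)
          rw [Real.volume_Ioo]; simp
  refine csSup_eq_of_forall_le_of_forall_lt_exists_gt ⟨g t - 1, hFle _ (by linarith)⟩ ?_ ?_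
  · intro x hx
    by_contra hc; push_neg at hc
    exact absurd hx (not_le.2 (hFgt x hc))
  · intro w hw
    exact ⟨(w + g t) / 2, hFle _ (by linarith), by linarith⟩

/-- Elementary bound `|a+b|^p ≤ 2^p (|a|^p + |b|^p)` for `p ≥ 0`. -/
lemma abs_add_rpow_le {p : ℝ} (hp : 0 ≤ p) (a b : ℝ) :
    |a + b| ^ p ≤ 2 ^ p * (|a| ^ p + |b| ^ p) := by
  have h1 : |a + b| ^ p ≤ (2 * max |a| |b|) ^ p := by
    refine Real.rpow_le_rpow (abs_nonneg _) ?_ hp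
    calc |a + b| ≤ |a| + |b| := abs_add_le a b
      _ ≤ 2 * max |a| |b| := by
        rcases le_total |a| |b| with h | h
        · rw [max_eq_right h]; linarith
        · rw [max_eq_left h]; linarith
  have h2 : (2 * max |a| |b|) ^ p = 2 ^ p * max |a| |b| ^ p :=
    Real.mul_rpow (by norm_num) (le_max_iff.2 (Or.inl (abs_nonneg a)))
  have h3 : max |a| |b| ^ p ≤ |a| ^ p + |b| ^ p := by
    rcases le_total |a| |b| with h | h
    · rw [max_eq_right h]
      nlinarith [Real.rpow_nonneg (abs_nonneg a) p]
    · rw [max_eq_left h]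
      nlinarith [Real.rpow_nonneg (abs_nonneg b) p]
  calc |a + b| ^ p ≤ 2 ^ p * max |a| |b| ^ p := h2 ▸ h1
    _ ≤ 2 ^ p * (|a| ^ p + |b| ^ p) := by
        have : (0:ℝ) ≤ 2 ^ p := Real.rpow_nonneg (by norm_num) p
        nlinarith

lemma measurable_abs_rpow {p : ℝ} (hp : 0 ≤ p) : Measurable fun x : ℝ => |x| ^ p :=
  ((Real.continuous_rpow_const hp).comp continuous_abs).measurable

/-- Transfer of `p`-th moment integrability along a pushforward of `leb01`. -/
lemma integrable_map_iff {p : ℝ} (hp : 0 ≤ p) {g : ℝ → ℝ} (hg : AEMeasurable g leb01) :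
    Integrable (fun x => |x| ^ p) (Measure.map g leb01) ↔
      Integrable (fun t => |g t| ^ p) leb01 := by
  rw [integrable_map_measure ((measurable_abs_rpow hp).aestronglyMeasurable) hg]
  rfl

variable {ν : Measure ℝ} [IsProbabilityMeasure ν]

lemma sum_monotoneOn :
    MonotoneOn (fun t => quantR μ t + quantR ν t) (Set.Ioo (0:ℝ) 1) :=
  fun s hs t ht hst =>
    add_le_add (quantR_monotoneOn hs ht hst) (quantR_monotoneOn hs ht hst)

lemma sum_rc : ∀ t ∈ Set.Ioo (0:ℝ) 1, ∀ x, quantR μ t + quantR ν t < x →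
    ∃ s ∈ Set.Ioo t 1, quantR μ s + quantR ν s ≤ x := by
  intro t ht x hx
  set ε := (x - (quantR μ t + quantR ν t)) / 2 with hε
  have hε0 : 0 < ε := by rw [hε]; linarith
  obtain ⟨s₁, hs₁, h₁⟩ := quantR_rc (μ := μ) ht (show quantR μ t < quantR μ t + ε by linarith)
  obtain ⟨s₂, hs₂, h₂⟩ := quantR_rc (μ := ν) ht (show quantR ν t < quantR ν t + ε by linarith)
  have hmem : min s₁ s₂ ∈ Set.Ioo (0:ℝ) 1 :=
    ⟨lt_trans ht.1 (lt_min hs₁.1 hs₂.1), lt_of_le_of_lt (min_le_left _ _) hs₁.2⟩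
  have hm1 : s₁ ∈ Set.Ioo (0:ℝ) 1 := ⟨lt_trans ht.1 hs₁.1, hs₁.2⟩
  have hm2 : s₂ ∈ Set.Ioo (0:ℝ) 1 := ⟨lt_trans ht.1 hs₂.1, hs₂.2⟩
  refine ⟨min s₁ s₂, ⟨lt_min hs₁.1 hs₂.1, lt_of_le_of_lt (min_le_left _ _) hs₁.2⟩, ?_⟩
  have b1 : quantR μ (min s₁ s₂) ≤ quantR μ s₁ :=
    quantR_monotoneOn hmem hm1 (min_le_left _ _)
  have b2 : quantR ν (min s₁ s₂) ≤ quantR ν s₂ :=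
    quantR_monotoneOn hmem hm2 (min_le_right _ _)
  linarith

lemma sum_aemeasurable :
    AEMeasurable (fun t => quantR μ t + quantR ν t) leb01 :=
  aemeasurable_restrict_of_monotoneOn measurableSet_Ioo sum_monotoneOn


lemma integrable_quant_of_mem {p : ℝ} (hp : 0 ≤ p) {μ : Measure ℝ} (hμ : μ ∈ PRp p) :
    Integrable (fun t => |quantR μ t| ^ p) leb01 := by
  haveI := hμ.1
  have h2 := hμ.2
  rw [← map_quantR (μ := μ)] at h2
  exact (integrable_map_iff hp quantR_aemeasurable).1 h2

lemma integrable_sum {p : ℝ} (hp : 0 ≤ p) {μ ν : Measure ℝ}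
    (hμ : μ ∈ PRp p) (hν : ν ∈ PRp p) :
    Integrable (fun t => |quantR μ t + quantR ν t| ^ p) leb01 := by
  haveI := hμ.1; haveI := hν.1
  refine Integrable.mono' (((integrable_quant_of_mem hp hμ).add
    (integrable_quant_of_mem hp hν)).const_mul (2 ^ p)) ?_ ?_
  · exact ((measurable_abs_rpow hp).comp_aemeasurable sum_aemeasurable).aestronglyMeasurable
  · filter_upwards with t
    rw [Real.norm_eq_abs, abs_of_nonneg (Real.rpow_nonneg (abs_nonneg _) p)]
    exact abs_add_rpow_le hp _ _

/-- Membership of the translated measure in `W_p`. -/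
lemma map_sum_mem {p : ℝ} (hp : 0 ≤ p) {μ ν : Measure ℝ}
    (hμ : μ ∈ PRp p) (hν : ν ∈ PRp p) :
    Measure.map (fun t => quantR μ t + quantR ν t) leb01 ∈ PRp p := by
  haveI := hμ.1; haveI := hν.1
  refine ⟨Measure.isProbabilityMeasure_map sum_aemeasurable, ?_⟩
  exact (integrable_map_iff hp sum_aemeasurable).2 (integrable_sum hp hμ hν)

lemma quantR_map_sum {p : ℝ} {μ ν : Measure ℝ}
    (hμ : μ ∈ PRp p) (hν : ν ∈ PRp p) {t : ℝ} (ht : t ∈ Set.Ioo (0:ℝ) 1) :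
    quantR (Measure.map (fun t => quantR μ t + quantR ν t) leb01) t
      = quantR μ t + quantR ν t := by
  haveI := hμ.1; haveI := hν.1
  exact quantR_map sum_monotoneOn sum_rc sum_aemeasurable ht


lemma dirac_eq_map (c : ℝ) : Measure.dirac c = Measure.map (fun _ => c) leb01 := by
  rw [Measure.map_const, measure_univ, one_smul]

lemma quantR_dirac {c t : ℝ} (ht : t ∈ Set.Ioo (0:ℝ) 1) : quantR (Measure.dirac c) t = c := by
  rw [dirac_eq_map c]
  refine quantR_map (monotoneOn_const) ?_ aemeasurable_const ht
  intro s hs x hx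
  exact ⟨(s + 1) / 2, ⟨by linarith [hs.1, hs.2], by linarith [hs.2]⟩, le_of_lt hx⟩

lemma dirac_mem {p : ℝ} (c : ℝ) : Measure.dirac c ∈ PRp p := by
  refine ⟨inferInstance, ?_⟩
  have h : (fun x : ℝ => |x| ^ p) =ᵐ[Measure.dirac c] fun _ => |c| ^ p :=
    ae_eq_dirac (fun x : ℝ => |x| ^ p)
  exact (integrable_const (|c| ^ p)).congr h.symm

lemma map_add_mem {p : ℝ} (hp : 0 ≤ p) {η : Measure ℝ} (hη : η ∈ PRp p) (a : ℝ) :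
    Measure.map (fun x => x + a) η ∈ PRp p := by
  haveI := hη.1
  have hm : Measurable fun x : ℝ => x + a := measurable_add_const a
  refine ⟨Measure.isProbabilityMeasure_map hm.aemeasurable, ?_⟩
  rw [integrable_map_measure (measurable_abs_rpow hp).aestronglyMeasurable hm.aemeasurable]
  refine Integrable.mono' ((hη.2.add (integrable_const (|a| ^ p))).const_mul (2 ^ p)) ?_ ?_
  · exact ((measurable_abs_rpow hp).comp hm).aestronglyMeasurable
  · filter_upwards with x
    rw [Function.comp_apply, Real.norm_eq_abs, abs_of_nonneg (Real.rpow_nonneg (abs_nonneg _) p)]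
    exact abs_add_rpow_le hp x a

lemma quantR_map_add {η : Measure ℝ} [IsProbabilityMeasure η] (a : ℝ) {t : ℝ}
    (ht : t ∈ Set.Ioo (0:ℝ) 1) :
    quantR (Measure.map (fun x => x + a) η) t = quantR η t + a := by
  have hrep : Measure.map (fun x => x + a) η
      = Measure.map (fun s => quantR η s + a) leb01 := by
    conv_lhs => rw [← map_quantR (μ := η)]
    rw [AEMeasurable.map_map_of_aemeasurable (measurable_add_const a).aemeasurable
      quantR_aemeasurable]
    rfl
  rw [hrep]
  refine quantR_map ?_ ?_ (quantR_aemeasurable.add_const a) ht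
  · exact fun s hs u hu hsu => add_le_add_left (quantR_monotoneOn hs hu hsu) a
  · intro s hs x hx
    obtain ⟨u, hu, hqu⟩ := quantR_rc (μ := η) hs (show quantR η s < x - a by linarith)
    exact ⟨u, hu, by linarith⟩

lemma dWpR_translate {p : ℝ} {μ₁ μ₂ ν : Measure ℝ}
    (h1 : μ₁ ∈ PRp p) (h2 : μ₂ ∈ PRp p) (hν : ν ∈ PRp p) :
    dWpR p (Measure.map (fun t => quantR μ₁ t + quantR ν t) leb01)
      (Measure.map (fun t => quantR μ₂ t + quantR ν t) leb01) = dWpR p μ₁ μ₂ := by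
  rw [dWpR, dWpR]
  congr 1
  refine intervalIntegral.integral_congr_ae ?_
  have h0 : ∀ᵐ x ∂(volume : Measure ℝ), x ≠ 1 := by
    rw [ae_iff]
    simpa using Real.volume_singleton (x := 1)
  filter_upwards [h0] with x hx hmem
  rw [Set.uIoc_of_le (by norm_num : (0:ℝ) ≤ 1)] at hmem
  have hx01 : x ∈ Set.Ioo (0:ℝ) 1 := ⟨hmem.1, lt_of_le_of_ne hmem.2 hx⟩
  rw [quantR_map_sum h1 hν hx01, quantR_map_sum h2 hν hx01]
  have : quantR μ₁ x + quantR ν x - (quantR μ₂ x + quantR ν x)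
      = quantR μ₁ x - quantR μ₂ x := by ring
  rw [this]

end TransAux


open TransAux in
/-- For `p ≥ 1` and `ν ∈ W_p(ℝ)`, the translation by `ν`, acting on quantile functions
by `F⁻¹_{φ(μ)} = F⁻¹_μ + F⁻¹_ν`, is a well-defined isometric embedding of `W_p(ℝ)`,
and it is bijective iff `ν` is a Dirac mass. -/
theorem translation_isometric_embedding (p : ℝ) (hp : 1 ≤ p)
    (ν : Measure ℝ) (hν : ν ∈ PRp p) :
    ∃ φ : Measure ℝ → Measure ℝ,
      (∀ μ ∈ PRp p, φ μ ∈ PRp p ∧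
        ∀ t ∈ Set.Ioo (0:ℝ) 1, quantR (φ μ) t = quantR μ t + quantR ν t) ∧
      (∀ μ₁ ∈ PRp p, ∀ μ₂ ∈ PRp p, dWpR p (φ μ₁) (φ μ₂) = dWpR p μ₁ μ₂) ∧
      (Set.SurjOn φ (PRp p) (PRp p) ↔ ∃ c : ℝ, ν = Measure.dirac c) := by
  classical
  haveI := hν.1
  have hp0 : (0:ℝ) ≤ p := le_trans zero_le_one hp
  refine ⟨fun μ => Measure.map (fun t => quantR μ t + quantR ν t) leb01, ?_, ?_, ?_⟩
  · intro μ hμ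
    haveI := hμ.1
    exact ⟨map_sum_mem hp0 hμ hν, fun t ht => quantR_map_sum hμ hν ht⟩
  · intro μ₁ h1 μ₂ h2
    exact dWpR_translate h1 h2 hν
  · constructor
    · intro hsurj
      obtain ⟨μ, hμ, hφμ⟩ := hsurj (dirac_mem (p := p) 0)
      haveI := hμ.1
      have hz : ∀ t ∈ Set.Ioo (0:ℝ) 1, quantR μ t + quantR ν t = 0 := by
        intro t ht
        have h1 := quantR_map_sum hμ hν ht
        have hφμ' : Measure.map (fun t => quantR μ t + quantR ν t) leb01
            = Measure.dirac 0 := hφμ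
        rw [hφμ', quantR_dirac ht] at h1
        exact h1.symm
      have hhalf : (1/2 : ℝ) ∈ Set.Ioo (0:ℝ) 1 := by norm_num
      refine ⟨quantR ν (1/2), ?_⟩
      have hconst : ∀ t ∈ Set.Ioo (0:ℝ) 1, quantR ν t = quantR ν (1/2) := by
        intro t ht
        have e1 := hz t ht
        have e2 := hz _ hhalf
        rcases le_total t (1/2) with h | h
        · have m1 := quantR_monotoneOn (μ := ν) ht hhalf h
          have m2 := quantR_monotoneOn (μ := μ) ht hhalf h
          linarith
        · have m1 := quantR_monotoneOn (μ := ν) hhalf ht h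
          have m2 := quantR_monotoneOn (μ := μ) hhalf ht h
          linarith
      have hae : quantR ν =ᵐ[leb01] fun _ => quantR ν (1/2) := by
        have hmem : ∀ᵐ t ∂leb01, t ∈ Set.Ioo (0:ℝ) 1 :=
          ae_restrict_mem measurableSet_Ioo
        filter_upwards [hmem] with t ht using hconst t ht
      calc ν = Measure.map (quantR ν) leb01 := (map_quantR (μ := ν)).symm
        _ = Measure.map (fun _ => quantR ν (1/2)) leb01 := Measure.map_congr hae
        _ = Measure.dirac (quantR ν (1/2)) := (dirac_eq_map _).symm
    · rintro ⟨c, rfl⟩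
      intro η hη
      haveI := hη.1
      refine ⟨Measure.map (fun x => x + (-c)) η, map_add_mem hp0 hη (-c), ?_⟩
      haveI : IsProbabilityMeasure (Measure.map (fun x => x + (-c)) η) :=
        Measure.isProbabilityMeasure_map (measurable_add_const (-c)).aemeasurable
      have hae : (fun t => quantR (Measure.map (fun x => x + (-c)) η) t
          + quantR (Measure.dirac c) t) =ᵐ[leb01] quantR η := by
        have hmem : ∀ᵐ t ∂leb01, t ∈ Set.Ioo (0:ℝ) 1 :=
          ae_restrict_mem measurableSet_Ioo
        filter_upwards [hmem] with t ht
        rw [quantR_map_add (-c) ht, quantR_dirac ht]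
        ring
      show Measure.map _ leb01 = η
      rw [Measure.map_congr hae, map_quantR]
end
end

section
/- Let X be a real strictly convex Banach space and K ⊂ X a convex set (possibly with empty interior) with 0 ∈ K such that the closed linear span of K is X. Then every isometric embedding φ: K → X with φ(0) = 0 extends uniquely to a linear isometric embedding L: X → X. -/
open Set

section MankAux

variable {X : Type*} [NormedAddCommGroup X] [NormedSpace ℝ X] [StrictConvexSpace ℝ X]
variable {K : Set X} {φ : X → X}

/-- An isometric embedding of a convex set into a strictly convex space preserves
convex combinations. -/
private lemma mank_comb (hK : Convex ℝ K)
    (hiso : ∀ x ∈ K, ∀ y ∈ K, ‖φ x - φ y‖ = ‖x - y‖)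
    {x y : X} (hx : x ∈ K) (hy : y ∈ K) {t : ℝ} (ht0 : 0 ≤ t) (ht1 : t ≤ 1) :
    φ ((1 - t) • x + t • y) = (1 - t) • φ x + t • φ y := by
  set z := (1 - t) • x + t • y with hzdef
  have hzK : z ∈ K := hK hx hy (by linarith) ht0 (by ring)
  have hxz : x - z = t • (x - y) := by rw [hzdef]; module
  have hzy : z - y = (1 - t) • (x - y) := by rw [hzdef]; module
  have h1 : dist (φ x) (φ z) = t * dist (φ x) (φ y) := by
    rw [dist_eq_norm, dist_eq_norm, hiso x hx z hzK, hiso x hx y hy, hxz, norm_smul,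
      Real.norm_of_nonneg ht0]
  have h2 : dist (φ z) (φ y) = (1 - t) * dist (φ x) (φ y) := by
    rw [dist_eq_norm, dist_eq_norm, hiso z hzK y hy, hiso x hx y hy, hzy, norm_smul,
      Real.norm_of_nonneg (by linarith : (0:ℝ) ≤ 1 - t)]
  have := eq_lineMap_of_dist_eq_mul_of_dist_eq_mul h1 h2
  rw [this, AffineMap.lineMap_apply_module]

private lemma mank_mid (hK : Convex ℝ K)
    (hiso : ∀ x ∈ K, ∀ y ∈ K, ‖φ x - φ y‖ = ‖x - y‖)
    {x y : X} (hx : x ∈ K) (hy : y ∈ K) :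
    φ (midpoint ℝ x y) = midpoint ℝ (φ x) (φ y) := by
  have h := mank_comb hK hiso hx hy (t := (2:ℝ)⁻¹) (by norm_num) (by norm_num)
  have e1 : midpoint ℝ x y = (1 - (2:ℝ)⁻¹) • x + (2:ℝ)⁻¹ • y := by
    rw [midpoint_eq_smul_add, invOf_eq_inv]; module
  have e2 : midpoint ℝ (φ x) (φ y) = (1 - (2:ℝ)⁻¹) • φ x + (2:ℝ)⁻¹ • φ y := by
    rw [midpoint_eq_smul_add, invOf_eq_inv]; module
  rw [e1, e2, h]

private lemma mank_diff (hK : Convex ℝ K)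
    (hiso : ∀ x ∈ K, ∀ y ∈ K, ‖φ x - φ y‖ = ‖x - y‖)
    {x y u v : X} (hx : x ∈ K) (hy : y ∈ K) (hu : u ∈ K) (hv : v ∈ K)
    (h : x - y = u - v) : φ x - φ y = φ u - φ v := by
  have hm : midpoint ℝ x v = midpoint ℝ u y := by
    rw [midpoint_eq_smul_add, midpoint_eq_smul_add]
    rw [sub_eq_sub_iff_add_eq_add.mp h]
  have h1 := mank_mid hK hiso hx hv
  have h2 := mank_mid hK hiso hu hy
  rw [hm, h2] at h1
  rw [midpoint_eq_smul_add, midpoint_eq_smul_add, invOf_eq_inv] at h1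
  have h3 : φ x + φ v = φ u + φ y :=
    (smul_right_injective X (by norm_num : ((2:ℝ)⁻¹) ≠ 0) h1).symm
  exact sub_eq_sub_iff_add_eq_add.mpr h3

private lemma mank_scale (hK : Convex ℝ K) (h0 : (0:X) ∈ K)
    (hiso : ∀ x ∈ K, ∀ y ∈ K, ‖φ x - φ y‖ = ‖x - y‖) (hφ0 : φ 0 = 0)
    {x : X} (hx : x ∈ K) {t : ℝ} (ht0 : 0 ≤ t) (ht1 : t ≤ 1) :
    φ (t • x) = t • φ x := by
  have h := mank_comb hK hiso h0 hx ht0 ht1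
  simpa [hφ0] using h

end MankAux

/-- Mankiewicz-type extension lemma: in a real strictly convex Banach space `X`, every
isometric embedding of a convex set `K ∋ 0` with dense linear span, fixing `0`, extends
uniquely to a linear isometric embedding of `X`. -/
theorem mankiewicz_type_extension {X : Type*} [NormedAddCommGroup X] [NormedSpace ℝ X]
    [CompleteSpace X] [StrictConvexSpace ℝ X]
    (K : Set X) (hK : Convex ℝ K) (h0 : (0:X) ∈ K)
    (hspan : (Submodule.span ℝ K).topologicalClosure = ⊤)
    (φ : X → X) (hiso : ∀ x ∈ K, ∀ y ∈ K, ‖φ x - φ y‖ = ‖x - y‖)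
    (hφ0 : φ 0 = 0) :
    ∃! L : X →ₗ[ℝ] X, Isometry L ∧ ∀ x ∈ K, L x = φ x := by
  classical
  set S : Submodule ℝ X := Submodule.span ℝ K with hSdef
  -- scaling elements of K by factors in [0,1] stays in K
  have hscaleK : ∀ {x : X}, x ∈ K → ∀ {r : ℝ}, 0 ≤ r → r ≤ 1 → r • x ∈ K := by
    intro x hx r hr0 hr1
    have := hK h0 hx (by linarith : (0:ℝ) ≤ 1 - r) hr0 (by ring)
    simpa using this
  -- well-definedness of the difference quotient (ordered version)
  have wd_le : ∀ (t s : ℝ) (x y u v z : X), 0 < t → 0 < s → s ≤ t →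
      x ∈ K → y ∈ K → u ∈ K → v ∈ K → t • z = x - y → s • z = u - v →
      t⁻¹ • (φ x - φ y) = s⁻¹ • (φ u - φ v) := by
    intro t s x y u v z ht hs hst hx hy hu hv he he'
    set r : ℝ := s / t with hrdef
    have hr0 : 0 < r := div_pos hs ht
    have hr1 : r ≤ 1 := (div_le_one ht).mpr hst
    have hru : u - v = r • x - r • y := by
      have : u - v = r • (x - y) := by
        rw [← he', ← he, smul_smul, hrdef, div_mul_cancel₀ _ (ne_of_gt ht)]
      rw [this, smul_sub]
    have hdiff := mank_diff hK hiso (hscaleK hx hr0.le hr1) (hscaleK hy hr0.le hr1) hu hv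
      hru.symm
    have hsx := mank_scale hK h0 hiso hφ0 hx hr0.le hr1
    have hsy := mank_scale hK h0 hiso hφ0 hy hr0.le hr1
    rw [hsx, hsy] at hdiff
    rw [← hdiff]
    match_scalars <;> (rw [hrdef]; field_simp)
  have wd : ∀ (t s : ℝ) (x y u v z : X), 0 < t → 0 < s →
      x ∈ K → y ∈ K → u ∈ K → v ∈ K → t • z = x - y → s • z = u - v →
      t⁻¹ • (φ x - φ y) = s⁻¹ • (φ u - φ v) := by
    intro t s x y u v z ht hs hx hy hu hv he he'
    rcases le_total s t with h | h
    · exact wd_le t s x y u v z ht hs h hx hy hu hv he he'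
    · exact (wd_le s t u v x y z hs ht h hu hv hx hy he' he).symm
  -- define the candidate map via choice
  have hgex : ∀ z : X, ∃ w : X, ∀ (t : ℝ) (x y : X), 0 < t → x ∈ K → y ∈ K →
      t • z = x - y → w = t⁻¹ • (φ x - φ y) := by
    intro z
    by_cases h : ∃ (t : ℝ) (x y : X), 0 < t ∧ x ∈ K ∧ y ∈ K ∧ t • z = x - y
    · obtain ⟨t, x, y, ht, hx, hy, he⟩ := h
      exact ⟨t⁻¹ • (φ x - φ y), fun s u v hs hu hv he' =>
        wd t s x y u v z ht hs hx hy hu hv he he'⟩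
    · exact ⟨0, fun t x y ht hx hy he => absurd ⟨t, x, y, ht, hx, hy, he⟩ h⟩
  choose g hg using hgex
  have hg0 : g 0 = 0 := by
    have := hg 0 1 0 0 one_pos h0 h0 (by simp)
    simpa using this
  have hgK : ∀ x ∈ K, g x = φ x := by
    intro x hx
    have := hg x 1 x 0 one_pos hx h0 (by simp)
    simpa [hφ0] using this
  -- rescaling representations
  have hresc : ∀ (z : X) (t : ℝ) (x y : X), 0 < t → x ∈ K → y ∈ K → t • z = x - y →
      ∀ c : ℝ, 0 < c → c ≤ t →
        (c / t) • x ∈ K ∧ (c / t) • y ∈ K ∧ c • z = (c / t) • x - (c / t) • y := by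
    intro z t x y ht hx hy he c hc hct
    have hr0 : (0:ℝ) ≤ c / t := (div_pos hc ht).le
    have hr1 : c / t ≤ 1 := (div_le_one ht).mpr hct
    refine ⟨hscaleK hx hr0 hr1, hscaleK hy hr0 hr1, ?_⟩
    have : c • z = (c / t) • (t • z) := by
      rw [smul_smul]; congr 1; field_simp
    rw [this, he, smul_sub]
  -- every element of the span has a representation
  have hmidK : ∀ {a : X}, a ∈ K → ∀ {b : X}, b ∈ K → midpoint ℝ a b ∈ K := by
    intro a ha b hb
    have := hK ha hb (by norm_num : (0:ℝ) ≤ 2⁻¹) (by norm_num : (0:ℝ) ≤ 2⁻¹) (by norm_num)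
    rw [midpoint_eq_smul_add, invOf_eq_inv, smul_add]
    exact this
  have hrep : ∀ z ∈ S, ∃ (t : ℝ) (x y : X), 0 < t ∧ x ∈ K ∧ y ∈ K ∧ t • z = x - y := by
    intro z hz
    induction hz using Submodule.span_induction with
    | mem x hx => exact ⟨1, x, 0, one_pos, hx, h0, by simp⟩
    | zero => exact ⟨1, 0, 0, one_pos, h0, h0, by simp⟩
    | add a b ha hb iha ihb =>
        obtain ⟨t, x, y, ht, hx, hy, he⟩ := iha
        obtain ⟨s, u, v, hs, hu, hv, he'⟩ := ihb
        set c : ℝ := min t s with hcdef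
        have hc : 0 < c := lt_min ht hs
        obtain ⟨hx', hy', hea⟩ := hresc a t x y ht hx hy he c hc (min_le_left _ _)
        obtain ⟨hu', hv', heb⟩ := hresc b s u v hs hu hv he' c hc (min_le_right _ _)
        refine ⟨c / 2, midpoint ℝ ((c/t) • x) ((c/s) • u),
          midpoint ℝ ((c/t) • y) ((c/s) • v), by positivity,
          hmidK hx' hu', hmidK hy' hv', ?_⟩
        rw [midpoint_eq_smul_add, midpoint_eq_smul_add, invOf_eq_inv]
        have : (c / 2) • (a + b) = (2:ℝ)⁻¹ • (c • a) + (2:ℝ)⁻¹ • (c • b) := by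
          match_scalars <;> ring
        rw [this, hea, heb]
        module
    | smul r a ha iha =>
        obtain ⟨t, x, y, ht, hx, hy, he⟩ := iha
        rcases lt_trichotomy r 0 with hr | hr | hr
        · refine ⟨t / (-r), y, x, div_pos ht (by linarith), hy, hx, ?_⟩
          rw [smul_smul]
          have hrne : r ≠ 0 := ne_of_lt hr
          have : t / (-r) * r = -t := by rw [div_neg, neg_mul, div_mul_cancel₀ t hrne]
          rw [this, neg_smul, he, neg_sub]
        · exact ⟨1, 0, 0, one_pos, h0, h0, by simp [hr]⟩
        · refine ⟨t / r, x, y, div_pos ht hr, hx, hy, ?_⟩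
          rw [smul_smul, div_mul_cancel₀ t (ne_of_gt hr), he]
  -- additivity of g on the span
  have hgadd : ∀ z ∈ S, ∀ w ∈ S, g (z + w) = g z + g w := by
    intro z hz w hw
    obtain ⟨t, x, y, ht, hx, hy, he⟩ := hrep z hz
    obtain ⟨s, u, v, hs, hu, hv, he'⟩ := hrep w hw
    set c : ℝ := min t s with hcdef
    have hc : 0 < c := lt_min ht hs
    obtain ⟨hx', hy', hea⟩ := hresc z t x y ht hx hy he c hc (min_le_left _ _)
    obtain ⟨hu', hv', heb⟩ := hresc w s u v hs hu hv he' c hc (min_le_right _ _)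
    set x' := (c/t) • x
    set y' := (c/t) • y
    set u' := (c/s) • u
    set v' := (c/s) • v
    have hm1 : midpoint ℝ x' u' ∈ K := hmidK hx' hu'
    have hm2 : midpoint ℝ y' v' ∈ K := hmidK hy' hv'
    have hezw : (c / 2) • (z + w) = midpoint ℝ x' u' - midpoint ℝ y' v' := by
      rw [midpoint_eq_smul_add, midpoint_eq_smul_add, invOf_eq_inv]
      have : (c / 2) • (z + w) = (2:ℝ)⁻¹ • (c • z) + (2:ℝ)⁻¹ • (c • w) := by
        match_scalars <;> ring
      rw [this, hea, heb]
      module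
    have hgz := hg z c x' y' hc hx' hy' hea
    have hgw := hg w c u' v' hc hu' hv' heb
    have hgzw := hg (z + w) (c / 2) _ _ (by positivity) hm1 hm2 hezw
    rw [hgzw, hgz, hgw]
    rw [mank_mid hK hiso hx' hu', mank_mid hK hiso hy' hv',
      midpoint_eq_smul_add, midpoint_eq_smul_add, invOf_eq_inv]
    have hcne : c ≠ 0 := ne_of_gt hc
    match_scalars <;> field_simp <;> ring
  -- homogeneity of g on the span
  have hgsmul : ∀ (r : ℝ), ∀ z ∈ S, g (r • z) = r • g z := by
    intro r z hz
    obtain ⟨t, x, y, ht, hx, hy, he⟩ := hrep z hz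
    have hgz := hg z t x y ht hx hy he
    rcases lt_trichotomy r 0 with hr | hr | hr
    · have hrz : (t / (-r)) • (r • z) = y - x := by
        rw [smul_smul]
        have hrne : r ≠ 0 := ne_of_lt hr
        have : t / (-r) * r = -t := by rw [div_neg, neg_mul, div_mul_cancel₀ t hrne]
        rw [this, neg_smul, he, neg_sub]
      have := hg (r • z) (t / (-r)) y x (div_pos ht (by linarith)) hy hx hrz
      rw [this, hgz]
      have ht' : t ≠ 0 := ne_of_gt ht
      have hr' : r ≠ 0 := ne_of_lt hr
      match_scalars <;> field_simp
    · simp [hr, hg0]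
    · have hrz : (t / r) • (r • z) = x - y := by
        rw [smul_smul]
        have : t / r * r = t := by field_simp
        rw [this, he]
      have := hg (r • z) (t / r) x y (div_pos ht hr) hx hy hrz
      rw [this, hgz]
      have ht' : t ≠ 0 := ne_of_gt ht
      have hr' : r ≠ 0 := ne_of_gt hr
      match_scalars <;> field_simp
  -- g preserves norms on the span
  have hgnorm : ∀ z ∈ S, ‖g z‖ = ‖z‖ := by
    intro z hz
    obtain ⟨t, x, y, ht, hx, hy, he⟩ := hrep z hz
    rw [hg z t x y ht hx hy he, norm_smul, Real.norm_eq_abs,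
      abs_of_pos (inv_pos.mpr ht), hiso x hx y hy, ← he, norm_smul, Real.norm_eq_abs,
      abs_of_pos ht, ← mul_assoc, inv_mul_cancel₀ (ne_of_gt ht), one_mul]
  -- the linear map on the span
  let f : S →ₗ[ℝ] X :=
    { toFun := fun z => g z.1
      map_add' := fun a b => hgadd a.1 a.2 b.1 b.2
      map_smul' := fun r a => hgsmul r a.1 a.2 }
  have hfnorm : ∀ z : S, ‖f z‖ = ‖z‖ := fun z => hgnorm z.1 z.2
  let fL : S →L[ℝ] X := f.mkContinuous 1 (fun z => by rw [hfnorm]; simp)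
  have hdenseS : Dense (S : Set X) := Submodule.dense_iff_topologicalClosure_eq_top.mpr hspan
  have hdense : DenseRange (S.subtypeL) := hdenseS.denseRange_val
  have h_e : IsUniformInducing (S.subtypeL) := isometry_subtype_coe.isUniformInducing
  let L0 : X →L[ℝ] X := fL.extend S.subtypeL
  have hL0S : ∀ z : S, L0 z = f z := fun z =>
    ContinuousLinearMap.extend_eq (f := fL) (e := S.subtypeL) hdense h_e z
  have hL0norm : ∀ z : X, ‖L0 z‖ = ‖z‖ := by
    have hC : IsClosed {z : X | ‖L0 z‖ = ‖z‖} :=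
      isClosed_eq (L0.continuous.norm) continuous_norm
    have hsub : (S : Set X) ⊆ {z : X | ‖L0 z‖ = ‖z‖} := by
      intro z hz
      have := hL0S ⟨z, hz⟩
      simp only [Set.mem_setOf_eq]
      rw [this, hfnorm ⟨z, hz⟩]
      rfl
    intro z
    exact closure_minimal hsub hC (hdenseS z)
  -- the final linear map
  refine ⟨L0.toLinearMap, ⟨?_, ?_⟩, ?_⟩
  · exact AddMonoidHomClass.isometry_of_norm L0.toLinearMap hL0norm
  · intro x hx
    have hxS : x ∈ S := Submodule.subset_span hx
    show L0 x = φ x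
    exact (hL0S ⟨x, hxS⟩).trans (hgK x hx)
  · -- uniqueness
    rintro L' ⟨hL'iso, hL'K⟩
    have hLK : ∀ x ∈ K, L0 x = φ x := by
      intro x hx
      have hxS : x ∈ S := Submodule.subset_span hx
      exact (hL0S ⟨x, hxS⟩).trans (hgK x hx)
    have hS : ∀ z ∈ S, L' z = L0 z := by
      intro z hz
      induction hz using Submodule.span_induction with
      | mem x hx => rw [hL'K x hx, hLK x hx]
      | zero => simp
      | add a b ha hb iha ihb => rw [map_add, map_add, iha, ihb]
      | smul r a ha iha => rw [map_smul, map_smul, iha]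
    have hC : IsClosed {z : X | L' z = L0 z} :=
      isClosed_eq hL'iso.continuous L0.continuous
    have hsub : (S : Set X) ⊆ {z : X | L' z = L0 z} := fun z hz => hS z hz
    ext z
    exact closure_minimal hsub hC (hdenseS z)
end
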